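/- arXiv:0711.1691 — 2 statements merged into one kernel-verified Lean document; each statement's English description precedes it below -/
import Mathlib

section
/- Let K and K' be simplicial complexes on disjoint finite vertex sets. If K satisfies the Taylor lower bound and K' satisfies the Taylor lower bound, then the join K ⋆ K' satisfies the Taylor lower bound. -/
open Finset

/-- A simplicial complex on a finite vertex set: a collection of finite subsets
(faces) of the vertex set, closed under inclusion, containing every singleton. -/
structure SC (α : Type*) [DecidableEq α] where
  verts : Finset α
  faces : Finset (Finset α)
  subset_verts : ∀ F ∈ faces, F ⊆ verts
  down_closed : ∀ F ∈ faces, ∀ G, G ⊆ F → G ∈ faces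
  singleton_mem : ∀ v ∈ verts, {v} ∈ faces

namespace SC

variable {α : Type*} [DecidableEq α]

/-- `dimP1 K = dim K + 1`: the maximal number of vertices of a face. -/
def dimP1 (K : SC α) : ℕ := K.faces.sup Finset.card

/-- The number of faces with exactly `j` vertices, i.e. `f_{j-1}(K)`. -/
def fCard (K : SC α) (j : ℕ) : ℕ := (K.faces.filter (fun F => F.card = j)).card

/-- The minimal non-faces of `K`: subsets of the vertex set which are not faces,
all of whose proper subsets are faces. -/
def minNonFaces (K : SC α) : Finset (Finset α) :=
  K.verts.powerset.filter (fun F => F ∉ K.faces ∧ ∀ G ∈ F.powerset, G ≠ F → G ∈ K.faces)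

/-- The `i`-th minimal Taylor shift `m̃_i(K)`: the minimal number of vertices covered by
a set of exactly `i` minimal non-faces of `K`. -/
noncomputable def mT (K : SC α) (i : ℕ) : ℕ :=
  sInf {n | ∃ T ⊆ K.minNonFaces, T.card = i ∧ (T.sup id).card = n}

/-- The `i`-th maximal Taylor shift `M̃_i(K)`: the maximal number of vertices covered by
a set of exactly `i` minimal non-faces of `K`. -/
noncomputable def MT (K : SC α) (i : ℕ) : ℕ :=
  sSup {n | ∃ T ⊆ K.minNonFaces, T.card = i ∧ (T.sup id).card = n}

/-- The conjectured Taylor upper bound `(∏_{i=1}^{n-d} M̃_i(K))/(n-d)!` on `f_{d-1}(K)`. -/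
noncomputable def taylorUBval (K : SC α) : ℚ :=
  (∏ i ∈ Finset.Icc 1 (K.verts.card - K.dimP1), (K.MT i : ℚ)) /
    (Nat.factorial (K.verts.card - K.dimP1))

/-- The conjectured Taylor lower bound `(∏_{i=1}^{n-d} m̃_i(K))/(n-d)!` on `f_{d-1}(K)`. -/
noncomputable def taylorLBval (K : SC α) : ℚ :=
  (∏ i ∈ Finset.Icc 1 (K.verts.card - K.dimP1), (K.mT i : ℚ)) /
    (Nat.factorial (K.verts.card - K.dimP1))

/-- `K` satisfies the Taylor upper bound: `f_{d-1}(K) ≤ (∏_{i=1}^{n-d} M̃_i(K))/(n-d)!`. -/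
def TaylorUB (K : SC α) : Prop := (K.fCard K.dimP1 : ℚ) ≤ K.taylorUBval

/-- `K` satisfies the Taylor lower bound: `f_{d-1}(K) ≥ (∏_{i=1}^{n-d} m̃_i(K))/(n-d)!`. -/
def TaylorLB (K : SC α) : Prop := K.taylorLBval ≤ (K.fCard K.dimP1 : ℚ)

/-- The induced subcomplex `K[W]`: the faces of `K` contained in `W`. -/
def induced (K : SC α) (W : Finset α) : SC α where
  verts := K.verts ∩ W
  faces := K.faces.filter (fun F => F ⊆ W)
  subset_verts := by
    intro F hF
    simp only [mem_filter] at hF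
    exact subset_inter (K.subset_verts F hF.1) hF.2
  down_closed := by
    intro F hF G hG
    simp only [mem_filter] at hF ⊢
    exact ⟨K.down_closed F hF.1 G hG, hG.trans hF.2⟩
  singleton_mem := by
    intro v hv
    simp only [mem_inter] at hv
    simp only [mem_filter, singleton_subset_iff]
    exact ⟨K.singleton_mem v hv.1, hv.2⟩

-- Auxiliary lemmas for taylorLB_join

theorem mem_mnf {K : SC α} {F : Finset α} : F ∈ K.minNonFaces ↔
    F ⊆ K.verts ∧ F ∉ K.faces ∧ ∀ G ⊆ F, G ≠ F → G ∈ K.faces := by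
  simp only [minNonFaces, Finset.mem_filter, Finset.mem_powerset, and_assoc]

theorem dimP1_le_card (K : SC α) : K.dimP1 ≤ K.verts.card :=
  Finset.sup_le fun F hF => Finset.card_le_card (K.subset_verts F hF)

theorem empty_mem_of_taylorLB (K : SC α) (h : TaylorLB K) : ∅ ∈ K.faces := by
  by_contra hne
  have hfaces : K.faces = ∅ := by
    ext F
    simp only [Finset.notMem_empty, iff_false]
    intro hFm
    exact hne (K.down_closed F hFm ∅ (Finset.empty_subset F))
  have hverts : K.verts = ∅ := by
    ext v
    simp only [Finset.notMem_empty, iff_false]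
    intro hv
    have := K.singleton_mem v hv
    rw [hfaces] at this
    exact absurd this (Finset.notMem_empty _)
  unfold TaylorLB taylorLBval fCard dimP1 at h
  rw [hfaces, hverts] at h
  simp at h
  norm_num at h

theorem exists_mnf_subset (K : SC α) {S : Finset α} (hS : S ⊆ K.verts) (hnf : S ∉ K.faces) :
    ∃ N ⊆ S, N ∈ K.minNonFaces := by
  classical
  obtain ⟨N, hNmem, hNmin⟩ := (S.powerset.filter (· ∉ K.faces)).exists_min_image
    Finset.card ⟨S, by simp [hnf]⟩
  simp only [Finset.mem_filter, Finset.mem_powerset] at hNmem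
  refine ⟨N, hNmem.1, mem_mnf.mpr ⟨hNmem.1.trans hS, hNmem.2, ?_⟩⟩
  intro G hG hGne
  by_contra hGnf
  have hGm : G ∈ S.powerset.filter (· ∉ K.faces) := by
    simp only [Finset.mem_filter, Finset.mem_powerset]
    exact ⟨hG.trans hNmem.1, hGnf⟩
  have h1 := hNmin G hGm
  have h2 : G.card < N.card := Finset.card_lt_card (ssubset_of_subset_of_ne hG hGne)
  omega

theorem card_mnf_lower (K : SC α) (h0 : ∅ ∈ K.faces) :
    K.verts.card - K.dimP1 ≤ K.minNonFaces.card := by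
  classical
  obtain ⟨F0, hF0, hF0card⟩ := Finset.exists_mem_eq_sup K.faces ⟨∅, h0⟩ Finset.card
  have hd : K.dimP1 = F0.card := hF0card
  have hF0v : F0 ⊆ K.verts := K.subset_verts _ hF0
  have key : ∀ v, ∃ N, v ∈ K.verts \ F0 →
      N ∈ K.minNonFaces ∧ N ⊆ insert v F0 ∧ v ∈ N := by
    intro v
    by_cases hv : v ∈ K.verts \ F0
    · have hv' := Finset.mem_sdiff.mp hv
      have hSnf : (insert v F0) ∉ K.faces := by
        intro hmem
        have h1 : (insert v F0).card ≤ K.dimP1 := Finset.le_sup hmem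
        rw [Finset.card_insert_of_notMem hv'.2] at h1
        omega
      have hSv : insert v F0 ⊆ K.verts := by
        intro x hx
        rcases Finset.mem_insert.mp hx with h | h
        · exact h ▸ hv'.1
        · exact hF0v h
      obtain ⟨N, hNsub, hNm⟩ := K.exists_mnf_subset hSv hSnf
      refine ⟨N, fun _ => ⟨hNm, hNsub, ?_⟩⟩
      by_contra hvN
      have hNF0 : N ⊆ F0 := by
        intro x hx
        rcases Finset.mem_insert.mp (hNsub hx) with h | h
        · exact absurd (h ▸ hx) hvN
        · exact h
      exact (mem_mnf.mp hNm).2.1 (K.down_closed F0 hF0 N hNF0)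
    · exact ⟨∅, fun h => absurd h hv⟩
  choose f hf using key
  have hmaps : ∀ v ∈ K.verts \ F0, f v ∈ K.minNonFaces := fun v hv => (hf v hv).1
  have hinj : Set.InjOn f ↑(K.verts \ F0) := by
    intro u hu v hv hEq
    have hu' : u ∈ K.verts \ F0 := Finset.mem_coe.mp hu
    have hv' : v ∈ K.verts \ F0 := Finset.mem_coe.mp hv
    have h1 : u ∈ f u := (hf u hu').2.2
    rw [hEq] at h1
    have h2 := (hf v hv').2.1 h1
    rcases Finset.mem_insert.mp h2 with h | h
    · exact h
    · exact absurd h (Finset.mem_sdiff.mp hu').2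
  have hcard := Finset.card_le_card_of_injOn f hmaps hinj
  have hsd : (K.verts \ F0).card = K.verts.card - F0.card := Finset.card_sdiff_of_subset hF0v
  omega

theorem mT_zero (K : SC α) : K.mT 0 = 0 := by
  have h : (0:ℕ) ∈ {n | ∃ T ⊆ K.minNonFaces, T.card = 0 ∧ (T.sup id).card = n} :=
    ⟨∅, Finset.empty_subset _, Finset.card_empty, by simp⟩
  exact Nat.le_zero.mp (Nat.sInf_le h)

theorem mT_exists (K : SC α) {a : ℕ} (ha : a ≤ K.minNonFaces.card) :
    ∃ T, T ⊆ K.minNonFaces ∧ T.card = a ∧ (T.sup id).card = K.mT a := by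
  have hne : {n | ∃ T ⊆ K.minNonFaces, T.card = a ∧ (T.sup id).card = n}.Nonempty := by
    obtain ⟨T, hT, hTc⟩ := Finset.exists_subset_card_eq ha
    exact ⟨(T.sup id).card, T, hT, hTc, rfl⟩
  have := Nat.sInf_mem hne
  obtain ⟨T, hT, hTc, hTs⟩ := this
  exact ⟨T, hT, hTc, hTs⟩

theorem mT_le (K : SC α) {T : Finset (Finset α)} {a : ℕ}
    (hT : T ⊆ K.minNonFaces) (hc : T.card = a) : K.mT a ≤ (T.sup id).card :=
  Nat.sInf_le ⟨T, hT, hc, rfl⟩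

end SC


lemma key_ineq (x y z : ℕ → ℕ) (hx0 : x 0 = 0) (hy0 : y 0 = 0) :
    ∀ N m m', m + m' ≤ N → (∀ a b, a ≤ m → b ≤ m' → z (a + b) ≤ x a + y b) →
      (∏ i ∈ Finset.Icc 1 (m + m'), z i) ≤
        (m + m').choose m * (∏ a ∈ Finset.Icc 1 m, x a) * (∏ b ∈ Finset.Icc 1 m', y b) := by
  intro N
  induction N with
  | zero =>
    intro m m' hle hz
    have h1 : m = 0 := by omega
    have h2 : m' = 0 := by omega
    subst h1 h2
    simp
  | succ N ih =>
    intro m m' hle hz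
    match m, m' with
    | 0, m' =>
      simp only [Nat.zero_add, Nat.choose_zero_right, one_mul]
      calc (∏ i ∈ Finset.Icc 1 m', z i) ≤ ∏ i ∈ Finset.Icc 1 m', y i := by
            apply Finset.prod_le_prod'
            intro i hi
            simp only [Finset.mem_Icc] at hi
            have := hz 0 i (le_refl 0) hi.2
            simpa [hx0] using this
        _ ≤ _ := by simp
    | m+1, 0 =>
      simp only [Nat.add_zero, Nat.choose_self]
      calc (∏ i ∈ Finset.Icc 1 (m+1), z i) ≤ ∏ i ∈ Finset.Icc 1 (m+1), x i := by
            apply Finset.prod_le_prod'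
            intro i hi
            simp only [Finset.mem_Icc] at hi
            have := hz i 0 hi.2 (le_refl 0)
            simpa [hy0] using this
        _ ≤ _ := by simp
    | ma+1, mb+1 =>
      have hM : ma + 1 + (mb + 1) = (ma + (mb+1)) + 1 := by omega
      rw [hM, Finset.prod_Icc_succ_top (by omega : 1 ≤ ma + (mb+1) + 1) z]
      have ih1 := ih ma (mb+1) (by omega) (fun a b ha hb => hz a b (by omega) hb)
      have ih2 := ih (ma+1) mb (by omega) (fun a b ha hb => hz a b ha (by omega))
      rw [show ma + 1 + mb = ma + (mb+1) from by omega] at ih2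
      have hztop : z (ma + (mb+1) + 1) ≤ x (ma+1) + y (mb+1) := by
        have := hz (ma+1) (mb+1) (le_refl _) (le_refl _)
        rwa [show ma + 1 + (mb+1) = ma + (mb+1) + 1 from by omega] at this
      rw [Finset.prod_Icc_succ_top (by omega : 1 ≤ ma + 1) x,
          Finset.prod_Icc_succ_top (by omega : 1 ≤ mb + 1) y]
      have hch : (ma + (mb + 1) + 1).choose (ma+1)
          = (ma + (mb+1)).choose ma + (ma + (mb+1)).choose (ma+1) :=
        Nat.choose_succ_succ (ma + (mb+1)) ma
      rw [hch]
      set P := ∏ i ∈ Finset.Icc 1 (ma + (mb+1)), z i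
      calc P * z (ma + (mb+1) + 1) ≤ P * (x (ma+1) + y (mb+1)) :=
            Nat.mul_le_mul_left _ hztop
        _ = P * x (ma+1) + P * y (mb+1) := by ring
        _ ≤ ((ma + (mb+1)).choose ma * (∏ a ∈ Finset.Icc 1 ma, x a) *
              ((∏ b ∈ Finset.Icc 1 mb, y b) * y (mb+1))) * x (ma+1)
            + ((ma + (mb+1)).choose (ma+1) * ((∏ a ∈ Finset.Icc 1 ma, x a) * x (ma+1)) *
              (∏ b ∈ Finset.Icc 1 mb, y b)) * y (mb+1) := by
            refine add_le_add (Nat.mul_le_mul_right _ ?_) (Nat.mul_le_mul_right _ ?_)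
            · rw [Finset.prod_Icc_succ_top (by omega : 1 ≤ mb + 1) y] at ih1
              exact ih1
            · rw [Finset.prod_Icc_succ_top (by omega : 1 ≤ ma + 1) x] at ih2
              exact ih2
        _ = ((ma + (mb+1)).choose ma + (ma + (mb+1)).choose (ma+1)) *
              ((∏ a ∈ Finset.Icc 1 ma, x a) * x (ma+1)) *
              ((∏ b ∈ Finset.Icc 1 mb, y b) * y (mb+1)) := by ring


open SC in
/-- If `K` and `K'` are simplicial complexes on disjoint vertex sets and both satisfy the
Taylor lower bound, then their join `J = K ⋆ K'` satisfies the Taylor lower bound. -/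
theorem taylorLB_join {α : Type*} [DecidableEq α] (K K' J : SC α)
    (hdisj : Disjoint K.verts K'.verts)
    (hV : J.verts = K.verts ∪ K'.verts)
    (hF : J.faces = (K.faces ×ˢ K'.faces).image (fun p => p.1 ∪ p.2))
    (hK : TaylorLB K) (hK' : TaylorLB K') :
    TaylorLB J := by
  classical
  have h0K : ∅ ∈ K.faces := empty_mem_of_taylorLB K hK
  have h0K' : ∅ ∈ K'.faces := empty_mem_of_taylorLB K' hK'
  -- face decomposition
  have hface : ∀ {F : Finset α}, F ∈ J.faces ↔
      ∃ A B, A ∈ K.faces ∧ B ∈ K'.faces ∧ F = A ∪ B := by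
    intro F
    rw [hF]
    simp only [Finset.mem_image, Finset.mem_product, Prod.exists]
    constructor
    · rintro ⟨A, B, ⟨hA, hB⟩, hU⟩
      exact ⟨A, B, hA, hB, hU.symm⟩
    · rintro ⟨A, B, hA, hB, hU⟩
      exact ⟨A, B, ⟨hA, hB⟩, hU.symm⟩
  have hKsubJ : ∀ A ∈ K.faces, A ∈ J.faces := fun A hA =>
    hface.mpr ⟨A, ∅, hA, h0K', by simp⟩
  have hK'subJ : ∀ B ∈ K'.faces, B ∈ J.faces := fun B hB =>
    hface.mpr ⟨∅, B, h0K, hB, by simp⟩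
  -- faces of J inside one side
  have hJfaceK : ∀ F ∈ J.faces, F ⊆ K.verts → F ∈ K.faces := by
    intro F hFm hFv
    obtain ⟨A, B, hA, hB, rfl⟩ := hface.mp hFm
    have hB0 : B = ∅ := by
      apply Finset.eq_empty_of_forall_notMem
      intro x hx
      exact Finset.disjoint_left.mp hdisj (hFv (Finset.mem_union_right A hx))
        (K'.subset_verts B hB hx)
    rw [hB0, Finset.union_empty]
    exact hA
  have hJfaceK' : ∀ F ∈ J.faces, F ⊆ K'.verts → F ∈ K'.faces := by
    intro F hFm hFv
    obtain ⟨A, B, hA, hB, rfl⟩ := hface.mp hFm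
    have hA0 : A = ∅ := by
      apply Finset.eq_empty_of_forall_notMem
      intro x hx
      exact Finset.disjoint_left.mp hdisj (K.subset_verts A hA hx)
        (hFv (Finset.mem_union_left B hx))
    rw [hA0, Finset.empty_union]
    exact hB
  -- minimal non-faces
  have hMNFK : K.minNonFaces ⊆ J.minNonFaces := by
    intro N hN
    obtain ⟨hNv, hNnf, hNmin⟩ := mem_mnf.mp hN
    refine mem_mnf.mpr ⟨hNv.trans (by rw [hV]; exact Finset.subset_union_left), ?_, ?_⟩
    · intro hNJ
      exact hNnf (hJfaceK N hNJ hNv)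
    · intro G hG hne
      exact hKsubJ _ (hNmin G hG hne)
  have hMNFK' : K'.minNonFaces ⊆ J.minNonFaces := by
    intro N hN
    obtain ⟨hNv, hNnf, hNmin⟩ := mem_mnf.mp hN
    refine mem_mnf.mpr ⟨hNv.trans (by rw [hV]; exact Finset.subset_union_right), ?_, ?_⟩
    · intro hNJ
      exact hNnf (hJfaceK' N hNJ hNv)
    · intro G hG hne
      exact hK'subJ _ (hNmin G hG hne)
  have hMNFdisj : Disjoint K.minNonFaces K'.minNonFaces := by
    rw [Finset.disjoint_left]
    intro N h1 h2
    have hv1 := (mem_mnf.mp h1).1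
    have hv2 := (mem_mnf.mp h2).1
    have hN0 : N = ∅ := by
      apply Finset.eq_empty_of_forall_notMem
      intro x hx
      exact Finset.disjoint_left.mp hdisj (hv1 hx) (hv2 hx)
    subst hN0
    exact (mem_mnf.mp h1).2.1 h0K
  -- dimensions
  have hdK : K.dimP1 ≤ K.verts.card := dimP1_le_card K
  have hdK' : K'.dimP1 ≤ K'.verts.card := dimP1_le_card K'
  obtain ⟨F0, hF0, hF0card⟩ := Finset.exists_mem_eq_sup K.faces ⟨∅, h0K⟩ Finset.card
  obtain ⟨F0', hF0', hF0card'⟩ := Finset.exists_mem_eq_sup K'.faces ⟨∅, h0K'⟩ Finset.card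
  have hdimJ : J.dimP1 = K.dimP1 + K'.dimP1 := by
    apply le_antisymm
    · apply Finset.sup_le
      intro F hFm
      obtain ⟨A, B, hA, hB, rfl⟩ := hface.mp hFm
      calc (A ∪ B).card ≤ A.card + B.card := Finset.card_union_le A B
        _ ≤ K.dimP1 + K'.dimP1 := add_le_add (Finset.le_sup hA) (Finset.le_sup hB)
    · have hmem : (F0 ∪ F0') ∈ J.faces := hface.mpr ⟨F0, F0', hF0, hF0', rfl⟩
      have hcard : (F0 ∪ F0').card = K.dimP1 + K'.dimP1 := by
        rw [Finset.card_union_of_disjoint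
          (hdisj.mono (K.subset_verts _ hF0) (K'.subset_verts _ hF0'))]
        have e : K.dimP1 = F0.card := hF0card
        have e' : K'.dimP1 = F0'.card := hF0card'
        omega
      calc K.dimP1 + K'.dimP1 = (F0 ∪ F0').card := hcard.symm
        _ ≤ J.dimP1 := Finset.le_sup hmem
  -- intersection trick
  have hinterK : ∀ A B : Finset α, A ⊆ K.verts → B ⊆ K'.verts →
      (A ∪ B) ∩ K.verts = A := by
    intro A B hA hB
    ext x
    simp only [Finset.mem_inter, Finset.mem_union]
    constructor
    · rintro ⟨h1 | h1, h2⟩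
      · exact h1
      · exact absurd h2 (Finset.disjoint_right.mp hdisj (hB h1))
    · intro hx
      exact ⟨Or.inl hx, hA hx⟩
  have hinterK' : ∀ A B : Finset α, A ⊆ K.verts → B ⊆ K'.verts →
      (A ∪ B) ∩ K'.verts = B := by
    intro A B hA hB
    ext x
    simp only [Finset.mem_inter, Finset.mem_union]
    constructor
    · rintro ⟨h1 | h1, h2⟩
      · exact absurd h2 (Finset.disjoint_left.mp hdisj (hA h1))
      · exact h1
    · intro hx
      exact ⟨Or.inr hx, hB hx⟩
  -- fCard product
  have hfprod : J.fCard J.dimP1 = K.fCard K.dimP1 * K'.fCard K'.dimP1 := by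
    rw [hdimJ]
    unfold fCard
    have himg : J.faces.filter (fun F => F.card = K.dimP1 + K'.dimP1)
        = ((K.faces.filter (fun F => F.card = K.dimP1)) ×ˢ
            (K'.faces.filter (fun F => F.card = K'.dimP1))).image (fun p => p.1 ∪ p.2) := by
      ext F
      simp only [Finset.mem_filter, Finset.mem_image, Finset.mem_product, Prod.exists]
      constructor
      · rintro ⟨hFm, hFc⟩
        obtain ⟨A, B, hA, hB, rfl⟩ := hface.mp hFm
        have hdAB : Disjoint A B := hdisj.mono (K.subset_verts _ hA) (K'.subset_verts _ hB)
        have hAc : A.card ≤ K.dimP1 := Finset.le_sup hA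
        have hBc : B.card ≤ K'.dimP1 := Finset.le_sup hB
        have hsum : A.card + B.card = K.dimP1 + K'.dimP1 := by
          rw [← Finset.card_union_of_disjoint hdAB]
          exact hFc
        exact ⟨A, B, ⟨⟨hA, by omega⟩, ⟨hB, by omega⟩⟩, rfl⟩
      · rintro ⟨A, B, ⟨⟨hA, hAc⟩, ⟨hB, hBc⟩⟩, rfl⟩
        refine ⟨hface.mpr ⟨A, B, hA, hB, rfl⟩, ?_⟩
        rw [Finset.card_union_of_disjoint
          (hdisj.mono (K.subset_verts _ hA) (K'.subset_verts _ hB)), hAc, hBc]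
    rw [himg, Finset.card_image_of_injOn, Finset.card_product]
    intro p hp q hq hpq
    simp only [Finset.mem_coe, Finset.mem_product, Finset.mem_filter] at hp hq
    have hp1 : p.1 ⊆ K.verts := K.subset_verts _ hp.1.1
    have hp2 : p.2 ⊆ K'.verts := K'.subset_verts _ hp.2.1
    have hq1 : q.1 ⊆ K.verts := K.subset_verts _ hq.1.1
    have hq2 : q.2 ⊆ K'.verts := K'.subset_verts _ hq.2.1
    have hpq' : p.1 ∪ p.2 = q.1 ∪ q.2 := hpq
    have e1 : p.1 = q.1 := by
      rw [← hinterK p.1 p.2 hp1 hp2, ← hinterK q.1 q.2 hq1 hq2, hpq']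
    have e2 : p.2 = q.2 := by
      rw [← hinterK' p.1 p.2 hp1 hp2, ← hinterK' q.1 q.2 hq1 hq2, hpq']
    exact Prod.ext e1 e2
  -- shifts
  set m := K.verts.card - K.dimP1 with hm_def
  set m' := K'.verts.card - K'.dimP1 with hm'_def
  have hmle : m ≤ K.minNonFaces.card := card_mnf_lower K h0K
  have hm'le : m' ≤ K'.minNonFaces.card := card_mnf_lower K' h0K'
  have hz : ∀ a b, a ≤ m → b ≤ m' → J.mT (a + b) ≤ K.mT a + K'.mT b := by
    intro a b ha hb
    obtain ⟨TA, hTAs, hTAc, hTAm⟩ := mT_exists K (ha.trans hmle)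
    obtain ⟨TB, hTBs, hTBc, hTBm⟩ := mT_exists K' (hb.trans hm'le)
    have hTdisj : Disjoint TA TB := Finset.disjoint_left.mpr
      (fun N h1 h2 => Finset.disjoint_left.mp hMNFdisj (hTAs h1) (hTBs h2))
    have hsub : TA ∪ TB ⊆ J.minNonFaces :=
      Finset.union_subset (hTAs.trans hMNFK) (hTBs.trans hMNFK')
    have hcard : (TA ∪ TB).card = a + b := by
      rw [Finset.card_union_of_disjoint hTdisj, hTAc, hTBc]
    refine (mT_le J hsub hcard).trans ?_
    rw [Finset.sup_union]
    calc (TA.sup id ⊔ TB.sup id).card ≤ (TA.sup id).card + (TB.sup id).card :=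
          Finset.card_union_le _ _
      _ = K.mT a + K'.mT b := by rw [hTAm, hTBm]
  have hMeq : J.verts.card - J.dimP1 = m + m' := by
    rw [hdimJ, hV, Finset.card_union_of_disjoint hdisj]
    omega
  have keyN := key_ineq K.mT K'.mT J.mT (mT_zero K) (mT_zero K') (m + m') m m' le_rfl hz
  -- assembly
  unfold TaylorLB taylorLBval at hK hK' ⊢
  rw [hfprod, hMeq]
  push_cast
  rw [← hm_def] at hK
  rw [← hm'_def] at hK'
  have hfacpos : (0:ℚ) < (Nat.factorial (m + m') : ℚ) := by
    exact_mod_cast Nat.factorial_pos (m + m')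
  have hfacpos1 : (0:ℚ) < (Nat.factorial m : ℚ) := by exact_mod_cast Nat.factorial_pos m
  have hfacpos2 : (0:ℚ) < (Nat.factorial m' : ℚ) := by exact_mod_cast Nat.factorial_pos m'
  have hid : ((m + m').choose m : ℚ) * (Nat.factorial m : ℚ) * (Nat.factorial m' : ℚ)
      = (Nat.factorial (m + m') : ℚ) := by
    have := Nat.choose_mul_factorial_mul_factorial (Nat.le_add_right m m')
    rw [Nat.add_sub_cancel_left] at this
    exact_mod_cast this
  have h1 : (∏ i ∈ Finset.Icc 1 (m + m'), (J.mT i : ℚ)) ≤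
      ((m + m').choose m : ℚ) * (∏ a ∈ Finset.Icc 1 m, (K.mT a : ℚ)) *
        (∏ b ∈ Finset.Icc 1 m', (K'.mT b : ℚ)) := by
    exact_mod_cast keyN
  calc (∏ i ∈ Finset.Icc 1 (m + m'), (J.mT i : ℚ)) / (Nat.factorial (m + m') : ℚ)
      ≤ (((m + m').choose m : ℚ) * (∏ a ∈ Finset.Icc 1 m, (K.mT a : ℚ)) *
          (∏ b ∈ Finset.Icc 1 m', (K'.mT b : ℚ))) / (Nat.factorial (m + m') : ℚ) := by
        gcongr
    _ = ((∏ a ∈ Finset.Icc 1 m, (K.mT a : ℚ)) / (Nat.factorial m : ℚ)) *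
        ((∏ b ∈ Finset.Icc 1 m', (K'.mT b : ℚ)) / (Nat.factorial m' : ℚ)) := by
        rw [div_mul_div_comm, div_eq_div_iff hfacpos.ne' (by positivity : ((Nat.factorial m : ℚ) * (Nat.factorial m' : ℚ)) ≠ 0), ← hid]
        ring
    _ ≤ (K.fCard K.dimP1 : ℚ) * (K'.fCard K'.dimP1 : ℚ) := by
        apply mul_le_mul hK hK'
        · positivity
        · positivity
end

section
/- Let K be a simplicial complex of dimension d−1 (d ≥ 1) with n vertices, where n > 24d + 3. Then K satisfies the Taylor lower bound strictly: f_{d−1}(K) > (∏_{i=1}^{n−d} m̃_i(K))/(n−d)!. -/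
open Finset

private lemma SCTaylor_arith1 {w s d : ℕ} (hs : s ≤ d) :
    (w - d)^2 ≤ ((w - s) - d)^2 + 2*d*(w-s) := by
  rcases le_or_gt d (w - s) with h | h
  · obtain ⟨e, he⟩ : ∃ e, w - s = d + e := ⟨w - s - d, by omega⟩
    have haw : w - d ≤ d + e := by omega
    calc (w-d)^2 ≤ (d+e)^2 := Nat.pow_le_pow_left haw 2
    _ ≤ e^2 + 2*d*(d+e) := by nlinarith [sq_nonneg d]
    _ = ((w-s) - d)^2 + 2*d*(w-s) := by
        rw [he]
        have h2 : d + e - d = e := by omega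
        rw [h2]
  · have h0 : (w-s)-d = 0 := by omega
    rw [h0]
    have haw : w - d ≤ w - s := by omega
    have : (w-d)^2 ≤ 2*d*(w-s) := by
      calc (w-d)^2 = (w-d)*(w-d) := by ring
      _ ≤ d*(w-s) := Nat.mul_le_mul (by omega) haw
      _ ≤ 2*d*(w-s) := by nlinarith
    omega

private lemma SCTaylor_pow_lt_factorial_aux (m : ℕ) (hm : 1 ≤ m) :
    ((5:ℝ)*m/14)^m < m.factorial := by
  induction m with
  | zero => simp at hm
  | succ k ih =>
    rcases Nat.lt_or_ge k 1 with hk | hk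
    · interval_cases k
      norm_num [Nat.factorial]
    · have ihk := ih hk
      have hkpos : (0:ℝ) < k := by exact_mod_cast hk
      have hexp : (((k:ℝ)+1)/k)^k ≤ Real.exp 1 := by
        have h1 : ((k:ℝ)+1)/k = 1/k + 1 := by field_simp; ring
        have h2 : (1:ℝ)/k + 1 ≤ Real.exp (1/k) := Real.add_one_le_exp _
        have h3 : (0:ℝ) ≤ 1/k + 1 := by positivity
        calc (((k:ℝ)+1)/k)^k ≤ (Real.exp (1/k))^k := by
              rw [h1]; exact pow_le_pow_left₀ h3 h2 k
        _ = Real.exp ((k:ℕ) * (1/k)) := (Real.exp_nat_mul _ _).symm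
        _ = Real.exp 1 := by rw [mul_one_div, div_self (ne_of_gt hkpos)]
      set A := (5:ℝ)*k/14 with hA
      set B := (5:ℝ)*(k+1)/14 with hB
      have hApos : 0 ≤ A := by positivity
      have hBpos : 0 < B := by positivity
      have hAB : B = A * (((k:ℝ)+1)/k) := by field_simp [hB, hA]; ring
      have hBk : B^k = A^k * (((k:ℝ)+1)/k)^k := by rw [hAB, mul_pow]
      have hexp1 : (0:ℝ) < Real.exp 1 := Real.exp_pos 1
      have hfac : (0:ℝ) < (k.factorial : ℝ) := by exact_mod_cast k.factorial_pos
      have step1 : B^(k+1) ≤ B * A^k * Real.exp 1 := by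
        rw [pow_succ, mul_comm (B^k) B, hBk, ← mul_assoc]
        exact mul_le_mul_of_nonneg_left hexp (by positivity)
      have step2 : B * A^k * Real.exp 1 < B * (k.factorial : ℝ) * Real.exp 1 := by
        have hAk : A^k < (k.factorial : ℝ) := by
          have : ((5:ℝ)*k/14)^k < k.factorial := ihk
          simpa [hA] using this
        have := mul_lt_mul_of_pos_left hAk hBpos
        exact mul_lt_mul_of_pos_right this hexp1
      have step3 : B * (k.factorial : ℝ) * Real.exp 1 < ((k:ℝ)+1) * k.factorial := by
        have he : Real.exp 1 < 2.8 := lt_trans Real.exp_one_lt_d9 (by norm_num)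
        have hBe : B * Real.exp 1 < (k:ℝ)+1 := by
          rw [hB]
          calc 5*((k:ℝ)+1)/14 * Real.exp 1 < 5*((k:ℝ)+1)/14 * 2.8 := by
                apply mul_lt_mul_of_pos_left he (by positivity)
          _ = ((k:ℝ)+1) := by ring
        calc B * (k.factorial : ℝ) * Real.exp 1 = (B * Real.exp 1) * k.factorial := by ring
        _ < (((k:ℝ)+1)) * k.factorial := mul_lt_mul_of_pos_right hBe hfac
      have hfin : B^(k+1) < ((k:ℝ)+1) * k.factorial := by linarith
      calc ((5:ℝ)*(k+1:ℕ)/14)^(k+1) = B^(k+1) := by push_cast [hB]; ring_nf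
      _ < ((k:ℝ)+1) * k.factorial := hfin
      _ = ((k+1).factorial : ℝ) := by rw [Nat.factorial_succ]; push_cast; ring

private lemma SCTaylor_nat_pow_lt_factorial {c m : ℕ} (hm : 1 ≤ m) (h : 14*c ≤ 5*m) :
    c^m < m.factorial := by
  have h1 : (c:ℝ) ≤ 5*m/14 := by
    rw [le_div_iff₀ (by norm_num : (0:ℝ) < 14)]
    have h0 : ((14*c : ℕ) : ℝ) ≤ ((5*m : ℕ) : ℝ) := Nat.cast_le.mpr h
    push_cast at h0
    linarith
  have h2 : ((c:ℝ))^m ≤ ((5:ℝ)*m/14)^m := pow_le_pow_left₀ (by positivity) h1 m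
  have h3 := SCTaylor_pow_lt_factorial_aux m hm
  have h4 : ((c:ℝ))^m < (m.factorial : ℝ) := lt_of_le_of_lt h2 h3
  exact_mod_cast h4

private lemma SCTaylor_sqrt_ineq {d m : ℕ} (hd : 1 ≤ d) (hm : 23*d + 4 ≤ m) :
    14*(d + Nat.sqrt (2*d*m) + 1) ≤ 5*m := by
  set k := Nat.sqrt (2*d*m) with hkdef
  have hk : k*k ≤ 2*d*m := Nat.sqrt_le _
  have hle : 14*d + 14 ≤ 5*m := by omega
  have key : (14*k)^2 ≤ (5*m - (14*d + 14))^2 := by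
    obtain ⟨a, ha⟩ : ∃ a, 5*m - (14*d+14) = a := ⟨_, rfl⟩
    have ha' : a + 14*d + 14 = 5*m := by omega
    rw [ha]
    nlinarith [hk, ha', hm, hd, Nat.mul_le_mul_left m hm, Nat.mul_le_mul_right m hd]
  have h14 : 14*k ≤ 5*m - (14*d+14) := (Nat.pow_le_pow_iff_left (by norm_num)).mp key
  omega

namespace SC

variable {α : Type*} [DecidableEq α]

lemma empty_mem_faces (K : SC α) (h : K.verts.Nonempty) : ∅ ∈ K.faces := by
  obtain ⟨v, hv⟩ := h
  exact K.down_closed _ (K.singleton_mem v hv) ∅ (empty_subset _)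

/-- Any subset of the vertex set containing no minimal non-face is a face. -/
lemma face_of_no_mnf (K : SC α) {S : Finset α} (hS : S ⊆ K.verts)
    (h : ∀ G ∈ K.minNonFaces, ¬ G ⊆ S) : S ∈ K.faces := by
  by_contra hSf
  have hne : (S.powerset.filter (fun T => T ∉ K.faces)).Nonempty :=
    ⟨S, by simp [hSf]⟩
  obtain ⟨T, hT, hTmin⟩ := Finset.exists_min_image _ Finset.card hne
  simp only [mem_filter, mem_powerset] at hT
  refine h T ?_ hT.1
  simp only [minNonFaces, mem_filter, mem_powerset]
  refine ⟨hT.1.trans hS, hT.2, fun G hG hGne => ?_⟩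
  by_contra hGf
  have hlt : G.card < T.card := Finset.card_lt_card (lt_of_le_of_ne hG hGne)
  have := hTmin G (by simp [mem_filter, mem_powerset, hG.trans hT.1, hGf])
  omega

lemma two_le_mnf_card (K : SC α) (hv : K.verts.Nonempty) {G : Finset α}
    (hG : G ∈ K.minNonFaces) : 2 ≤ G.card := by
  simp only [minNonFaces, mem_filter, mem_powerset] at hG
  by_contra h
  interval_cases hc : G.card
  · rw [Finset.card_eq_zero.mp hc] at hG
    exact hG.2.1 (K.empty_mem_faces hv)
  · obtain ⟨v, rfl⟩ := Finset.card_eq_one.mp hc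
    exact hG.2.1 (K.singleton_mem v (hG.1 (mem_singleton_self v)))

lemma card_le_dimP1 (K : SC α) {S : Finset α} (hS : S ∈ K.faces) : S.card ≤ K.dimP1 :=
  Finset.le_sup hS

/-- Key counting lemma: a set of `w` vertices contains at least `(w-d)^2/(2d)`
minimal non-faces. -/
lemma sq_le_mnf (K : SC α) (hv : K.verts.Nonempty) :
    ∀ W : Finset α, W ⊆ K.verts →
      (W.card - K.dimP1)^2 ≤ 2 * K.dimP1 * (K.minNonFaces.filter (fun G => G ⊆ W)).card := by
  intro W
  induction W using Finset.strongInduction with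
  | _ W ih =>
    intro hWv
    by_cases hwd : W.card ≤ K.dimP1
    · simp [Nat.sub_eq_zero_of_le hwd]
    push_neg at hwd
    set I : Finset (Finset α) :=
      W.powerset.filter (fun S => ∀ G ∈ K.minNonFaces, ¬ G ⊆ S) with hI
    have hIne : (∅ : Finset α) ∈ I := by
      simp only [hI, mem_filter, mem_powerset]
      refine ⟨empty_subset _, fun G hG hGs => ?_⟩
      have h2 := K.two_le_mnf_card hv hG
      rw [Finset.subset_empty.mp hGs] at h2
      simp at h2
    obtain ⟨S, hSmem, hSmax⟩ := Finset.exists_max_image I Finset.card ⟨∅, hIne⟩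
    simp only [hI, mem_filter, mem_powerset] at hSmem
    obtain ⟨hSW, hSind⟩ := hSmem
    have hSface : S ∈ K.faces := K.face_of_no_mnf (hSW.trans hWv) hSind
    have hSd : S.card ≤ K.dimP1 := K.card_le_dimP1 hSface
    have hWne : W.Nonempty := Finset.card_pos.mp (by omega)
    obtain ⟨v0, hv0⟩ := hWne
    have hsingle : ({v0} : Finset α) ∈ I := by
      simp only [hI, mem_filter, mem_powerset, singleton_subset_iff]
      refine ⟨hv0, fun G hG hGs => ?_⟩
      have h2 := K.two_le_mnf_card hv hG
      have h3 := Finset.card_le_card hGs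
      simp at h3; omega
    have hSne : 1 ≤ S.card := by
      have := hSmax _ hsingle
      simpa using this
    have hssub : W \ S ⊂ W := Finset.sdiff_ssubset hSW (Finset.card_pos.mp hSne)
    have hIH := ih (W \ S) hssub ((Finset.sdiff_subset).trans hWv)
    have hspec : ∀ v ∈ W \ S, ∃ G ∈ K.minNonFaces, G ⊆ insert v S := by
      intro v hvWS
      simp only [mem_sdiff] at hvWS
      by_contra hcon
      push_neg at hcon
      have hmem : insert v S ∈ I := by
        simp only [hI, mem_filter, mem_powerset]
        exact ⟨insert_subset hvWS.1 hSW, hcon⟩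
      have := hSmax _ hmem
      rw [Finset.card_insert_of_notMem hvWS.2] at this
      omega
    classical
    set g : α → Finset α := fun v =>
      if h : ∃ G ∈ K.minNonFaces, G ⊆ insert v S then h.choose else ∅ with hg
    have hgspec : ∀ v ∈ W \ S, g v ∈ K.minNonFaces ∧ g v ⊆ insert v S := by
      intro v hvWS
      have h := hspec v hvWS
      simp only [hg, dif_pos h]
      exact h.choose_spec
    have hvg : ∀ v ∈ W \ S, v ∈ g v := by
      intro v hvWS
      by_contra hvn
      obtain ⟨h1, h2⟩ := hgspec v hvWS
      have : g v ⊆ S := fun x hx => by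
        rcases Finset.mem_insert.mp (h2 hx) with rfl | hxS
        · exact absurd hx hvn
        · exact hxS
      exact hSind _ h1 this
    set F1 := K.minNonFaces.filter (fun G => G ⊆ W) with hF1
    set F2 := K.minNonFaces.filter (fun G => G ⊆ W \ S) with hF2
    have hF21 : F2 ⊆ F1 := by
      intro G hG
      simp only [hF1, hF2, mem_filter] at *
      exact ⟨hG.1, hG.2.trans (Finset.sdiff_subset)⟩
    have hmaps : ∀ v ∈ W \ S, g v ∈ F1 \ F2 := by
      intro v hvWS
      obtain ⟨h1, h2⟩ := hgspec v hvWS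
      simp only [mem_sdiff, hF1, hF2, mem_filter] at hvWS ⊢
      refine ⟨⟨h1, h2.trans (insert_subset hvWS.1 hSW)⟩, ?_⟩
      rintro ⟨-, hsub⟩
      have hcard := K.two_le_mnf_card hv h1
      have hne : (g v \ {v}).Nonempty := by
        rw [← Finset.card_pos]
        have h4 := Finset.le_card_sdiff ({v} : Finset α) (g v)
        simp only [Finset.card_singleton] at h4
        omega
      obtain ⟨x, hx⟩ := hne
      simp only [mem_sdiff, mem_singleton] at hx
      have hxS : x ∈ S := by
        rcases Finset.mem_insert.mp (h2 hx.1) with h | h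
        · exact absurd h hx.2
        · exact h
      have := hsub hx.1
      simp only [mem_sdiff] at this
      exact this.2 hxS
    have hinj : Set.InjOn g (W \ S : Finset α) := by
      intro u hu v hv' heq
      simp only [Finset.coe_sdiff, Set.mem_diff, Finset.mem_coe] at hu hv'
      have huWS : u ∈ W \ S := by simp [mem_sdiff]; tauto
      have hvWS : v ∈ W \ S := by simp [mem_sdiff]; tauto
      have h1 := hvg u huWS
      rw [heq] at h1
      rcases Finset.mem_insert.mp ((hgspec v hvWS).2 h1) with h | h
      · exact h
      · exact absurd h (by simp only [mem_sdiff] at huWS; exact huWS.2)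
    have hcount : (W \ S).card ≤ (F1 \ F2).card :=
      Finset.card_le_card_of_injOn g hmaps hinj
    have hF1card : F2.card + (W \ S).card ≤ F1.card := by
      have h5 := Finset.card_sdiff_of_subset hF21
      have h6 := Finset.card_le_card hF21
      omega
    have hWS : (W \ S).card = W.card - S.card := Finset.card_sdiff_of_subset hSW
    calc (W.card - K.dimP1)^2
        ≤ ((W.card - S.card) - K.dimP1)^2 + 2*K.dimP1*(W.card - S.card) := SCTaylor_arith1 hSd
      _ = ((W \ S).card - K.dimP1)^2 + 2*K.dimP1*(W \ S).card := by rw [hWS]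
      _ ≤ 2*K.dimP1*F2.card + 2*K.dimP1*(W \ S).card := Nat.add_le_add_right hIH _
      _ = 2*K.dimP1*(F2.card + (W \ S).card) := by ring
      _ ≤ 2*K.dimP1*F1.card := Nat.mul_le_mul_left _ hF1card

/-- The `i`-th minimal Taylor shift is at most `d + √(2di) + 1`. -/
lemma mT_le_s10 (K : SC α) (hv : K.verts.Nonempty) (i : ℕ)
    (hwn : K.dimP1 + Nat.sqrt (2*K.dimP1*i) + 1 ≤ K.verts.card) :
    K.mT i ≤ K.dimP1 + Nat.sqrt (2*K.dimP1*i) + 1 := by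
  obtain ⟨W, hWsub, hWcard⟩ := Finset.exists_subset_card_eq hwn
  have hkey := K.sq_le_mnf hv W hWsub
  rw [hWcard] at hkey
  have hwd : K.dimP1 + Nat.sqrt (2*K.dimP1*i) + 1 - K.dimP1 = Nat.sqrt (2*K.dimP1*i) + 1 := by
    omega
  rw [hwd] at hkey
  have hsq : 2*K.dimP1*i < (Nat.sqrt (2*K.dimP1*i) + 1)^2 := Nat.lt_succ_sqrt' _
  have hit : i < (K.minNonFaces.filter (fun G => G ⊆ W)).card := by
    by_contra hcon
    push_neg at hcon
    have h2 : 2*K.dimP1*(K.minNonFaces.filter (fun G => G ⊆ W)).card ≤ 2*K.dimP1*i :=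
      Nat.mul_le_mul_left _ hcon
    have h3 : 2*K.dimP1*i < 2*K.dimP1*i := lt_of_lt_of_le (lt_of_lt_of_le hsq hkey) h2
    exact lt_irrefl _ h3
  obtain ⟨T, hTsub, hTcard⟩ := Finset.exists_subset_card_eq hit.le
  have hTm : T ⊆ K.minNonFaces := hTsub.trans (Finset.filter_subset _ _)
  have hUsub : T.sup id ⊆ W := by
    intro x hx
    obtain ⟨F, hF, hxF⟩ := Finset.mem_sup.mp hx
    exact (Finset.mem_filter.mp (hTsub hF)).2 hxF
  have hmem : (T.sup id).card ∈ {n | ∃ T ⊆ K.minNonFaces, T.card = i ∧ (T.sup id).card = n} :=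
    ⟨T, hTm, hTcard, rfl⟩
  calc K.mT i ≤ (T.sup id).card := Nat.sInf_le hmem
  _ ≤ W.card := Finset.card_le_card hUsub
  _ = _ := hWcard

end SC

open SC in
/-- A simplicial complex of dimension `d-1` on more than `24d + 3` vertices satisfies the
Taylor lower bound strictly. -/
theorem taylorLB_strict_of_large {α : Type*} [DecidableEq α] (K : SC α) (d : ℕ)
    (hd : 1 ≤ d) (hdim : K.dimP1 = d) (hn : 24 * d + 3 < K.verts.card) :
    K.taylorLBval < (K.fCard d : ℚ) := by
  subst hdim
  have hv : K.verts.Nonempty := Finset.card_pos.mp (by omega)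
  set m := K.verts.card - K.dimP1 with hm
  have hdn : K.dimP1 ≤ K.verts.card := by omega
  have hm4 : 23*K.dimP1 + 4 ≤ m := by omega
  have hm1 : 1 ≤ m := by omega
  have hfne : K.faces.Nonempty := hv.elim fun v hv' => ⟨{v}, K.singleton_mem v hv'⟩
  obtain ⟨F, hF, hFsup⟩ := Finset.exists_mem_eq_sup K.faces hfne Finset.card
  have hf1 : 1 ≤ K.fCard K.dimP1 :=
    Finset.card_pos.mpr ⟨F, Finset.mem_filter.mpr ⟨hF, hFsup.symm⟩⟩
  set C := K.dimP1 + Nat.sqrt (2*K.dimP1*m) + 1 with hC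
  have h14 : 14*C ≤ 5*m := SCTaylor_sqrt_ineq hd hm4
  have hCm : C ≤ m := by omega
  have hmT : ∀ i ∈ Finset.Icc 1 m, K.mT i ≤ C := by
    intro i hi
    simp only [Finset.mem_Icc] at hi
    have hsm : Nat.sqrt (2*K.dimP1*i) ≤ Nat.sqrt (2*K.dimP1*m) :=
      Nat.sqrt_le_sqrt (Nat.mul_le_mul_left _ hi.2)
    have hwn : K.dimP1 + Nat.sqrt (2*K.dimP1*i) + 1 ≤ K.verts.card := by omega
    exact le_trans (K.mT_le_s10 hv i hwn) (by omega)
  have hprod : (∏ i ∈ Finset.Icc 1 m, K.mT i) ≤ C^m := by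
    have h := Finset.prod_le_pow_card (Finset.Icc 1 m) (fun i => K.mT i) C hmT
    simpa [Nat.card_Icc] using h
  have hCf : C^m < m.factorial := SCTaylor_nat_pow_lt_factorial hm1 h14
  have hlt : (∏ i ∈ Finset.Icc 1 m, K.mT i) < K.fCard K.dimP1 * m.factorial := by
    calc (∏ i ∈ Finset.Icc 1 m, K.mT i) < m.factorial := lt_of_le_of_lt hprod hCf
    _ ≤ K.fCard K.dimP1 * m.factorial := Nat.le_mul_of_pos_left _ hf1
  unfold taylorLBval
  rw [← hm]
  rw [div_lt_iff₀ (by positivity : (0:ℚ) < (m.factorial : ℚ))]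
  have hcast : ((∏ i ∈ Finset.Icc 1 m, K.mT i : ℕ) : ℚ) <
      ((K.fCard K.dimP1 * m.factorial : ℕ) : ℚ) := Nat.cast_lt.mpr hlt
  push_cast at hcast
  convert hcast using 2
end
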